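/- Let S be a nonempty closed convex subset of ℝ^{d1×d2} (equipped with the Frobenius inner product), let f : ℝ^{d1×d2} → ℝ be convex and differentiable with gradient satisfying ‖∇f(X) − ∇f(Y)‖_F ≤ L‖X−Y‖_F for all X, Y and some L > 0, and let M̂ be a minimizer of f over S. Define the accelerated proximal gradient iterates: Z_0 = M_0 ∈ S, and for k ≥ 1, M_k = Π_S(Z_{k−1} − (1/L)∇f(Z_{k−1})) and Z_k = M_k + ((k−1)/(k+2))(M_k − M_{k−1}). Then for every k ≥ 1, f(M_k) − f(M̂) ≤ 2L‖M_0 − M̂‖_F² / (k+1)². -/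

import Mathlib

open RealInnerProductSpace

lemma convex_grad_ineq {E : Type*} [NormedAddCommGroup E] [InnerProductSpace ℝ E] [CompleteSpace E]
    {f : E → ℝ} (hf : ConvexOn ℝ Set.univ f) {y g : E} (hg : HasGradientAt f g y) (x : E) :
    f y + ⟪g, x - y⟫ ≤ f x := by
  set d := x - y with hd
  set g1 : ℝ → ℝ := fun t => f (y + t • d) with hg1
  have hφ : ∀ t : ℝ, HasDerivAt (fun t : ℝ => y + t • d) d t := by
    intro t
    simpa using ((hasDerivAt_id t).smul_const d).const_add y
  have hder : HasDerivAt g1 ⟪g, d⟫ 0 := by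
    have h0 : HasFDerivAt f (InnerProductSpace.toDual ℝ E g) ((fun t : ℝ => y + t • d) 0) := by
      simpa using hg.hasFDerivAt
    have h2 := h0.comp_hasDerivAt 0 (hφ 0)
    simp at h2
    exact h2
  have hcv : ConvexOn ℝ Set.univ g1 := by
    have := hf.comp_affineMap (AffineMap.lineMap y x : ℝ →ᵃ[ℝ] E)
    have he : (f ∘ (AffineMap.lineMap y x : ℝ →ᵃ[ℝ] E)) = g1 := by
      funext t
      simp [hg1, AffineMap.lineMap_apply, hd, add_comm]
    rw [he] at this
    simpa using this
  have hmono := hcv.slope_mono (Set.mem_univ (0:ℝ))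
  have hkey : ∀ᶠ t in nhdsWithin (0:ℝ) {0}ᶜ, slope g1 0 t ≤ g1 1 - g1 0 := by
    have h1 : Set.Iio (1:ℝ) ∈ nhdsWithin (0:ℝ) {0}ᶜ :=
      nhdsWithin_le_nhds (Iio_mem_nhds one_pos)
    filter_upwards [h1, self_mem_nhdsWithin] with t ht ht0
    have := hmono (Set.mem_diff_singleton.2 ⟨trivial, ht0⟩)
      (Set.mem_diff_singleton.2 ⟨trivial, one_ne_zero⟩) (le_of_lt ht)
    simpa [slope_def_field] using this
  have htend := hasDerivAt_iff_tendsto_slope.mp hder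
  have := le_of_tendsto htend hkey
  have h1 : g1 1 = f x := by simp [hg1, hd]
  have h0 : g1 0 = f y := by simp [hg1]
  rw [h1, h0] at this
  linarith

lemma descent_lemma {E : Type*} [NormedAddCommGroup E] [InnerProductSpace ℝ E] [CompleteSpace E]
    {f : E → ℝ} {f' : E → E} (hgrad : ∀ x, HasGradientAt f (f' x) x)
    {L : ℝ} (hL : 0 < L) (hlip : ∀ x y, ‖f' x - f' y‖ ≤ L * ‖x - y‖) (y z : E) :
    f z ≤ f y + ⟪f' y, z - y⟫ + L / 2 * ‖z - y‖ ^ 2 := by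
  set d := z - y with hd
  have hcont' : Continuous f' := by
    have : LipschitzWith (Real.toNNReal L) f' := by
      apply LipschitzWith.of_dist_le_mul
      intro a b
      rw [dist_eq_norm, dist_eq_norm, Real.coe_toNNReal _ hL.le]
      exact hlip a b
    exact this.continuous
  have hφ : ∀ t : ℝ, HasDerivAt (fun t : ℝ => y + t • d) d t := by
    intro t
    simpa using ((hasDerivAt_id t).smul_const d).const_add y
  set h : ℝ → ℝ := fun t => ⟪f' (y + t • d), d⟫ with hh
  have hder : ∀ t ∈ Set.uIcc (0:ℝ) 1, HasDerivAt (fun t : ℝ => f (y + t • d)) (h t) t := by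
    intro t _
    have h0 : HasFDerivAt f (InnerProductSpace.toDual ℝ E (f' (y + t • d)))
        ((fun t : ℝ => y + t • d) t) := (hgrad _).hasFDerivAt
    have h2 := h0.comp_hasDerivAt t (hφ t)
    simp at h2
    exact h2
  have hcd : Continuous h := by
    apply Continuous.inner
    · exact hcont'.comp (continuous_const.add (continuous_id.smul continuous_const))
    · exact continuous_const
  have hint := intervalIntegral.integral_eq_sub_of_hasDerivAt hder
    (hcd.intervalIntegrable 0 1)
  have h1 : y + (1:ℝ) • d = z := by simp [hd]
  have h0 : y + (0:ℝ) • d = y := by simp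
  rw [h1, h0] at hint
  have hmono : ∫ t in (0:ℝ)..1, h t ≤ ∫ t in (0:ℝ)..1, (⟪f' y, d⟫ + (L * ‖d‖ ^ 2) * t) := by
    apply intervalIntegral.integral_mono_on (by norm_num) (hcd.intervalIntegrable 0 1)
    · exact ((continuous_const.add (continuous_const.mul continuous_id)).intervalIntegrable 0 1)
    · intro t ht
      have hsplit : h t = ⟪f' y, d⟫ + ⟪f' (y + t • d) - f' y, d⟫ := by
        rw [inner_sub_left]; ring
      rw [hsplit]
      have h2 : ⟪f' (y + t • d) - f' y, d⟫ ≤ ‖f' (y + t • d) - f' y‖ * ‖d‖ :=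
        real_inner_le_norm _ _
      have h3 : ‖f' (y + t • d) - f' y‖ ≤ L * (t * ‖d‖) := by
        have := hlip (y + t • d) y
        simpa [norm_smul, Real.norm_eq_abs, abs_of_nonneg ht.1, mul_assoc] using this
      have h4 : ‖f' (y + t • d) - f' y‖ * ‖d‖ ≤ L * (t * ‖d‖) * ‖d‖ :=
        mul_le_mul_of_nonneg_right h3 (norm_nonneg _)
      have : L * (t * ‖d‖) * ‖d‖ = (L * ‖d‖ ^ 2) * t := by ring
      linarith
  have hrhs : ∫ t in (0:ℝ)..1, (⟪f' y, d⟫ + (L * ‖d‖ ^ 2) * t)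
      = ⟪f' y, d⟫ + L / 2 * ‖d‖ ^ 2 := by
    have i2 : IntervalIntegrable (fun t : ℝ => (L * ‖d‖ ^ 2) * t) MeasureTheory.volume 0 1 :=
      (continuous_const.mul continuous_id).intervalIntegrable 0 1
    rw [intervalIntegral.integral_add (intervalIntegrable_const) i2,
      intervalIntegral.integral_const, intervalIntegral.integral_const_mul,
      integral_id, smul_eq_mul]
    ring
  rw [hint] at hmono
  rw [hrhs] at hmono
  linarith

lemma proj_vi {E : Type*} [NormedAddCommGroup E] [InnerProductSpace ℝ E]
    {S : Set E} (hconv : Convex ℝ S) {u v : E} (hv : v ∈ S)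
    (hmin : ∀ x ∈ S, ‖v - u‖ ≤ ‖x - u‖) : ∀ w ∈ S, ⟪u - v, w - v⟫ ≤ 0 := by
  haveI : Nonempty S := ⟨⟨v, hv⟩⟩
  rw [← norm_eq_iInf_iff_real_inner_le_zero hconv hv]
  apply le_antisymm
  · apply le_ciInf
    rintro ⟨w, hw⟩
    rw [norm_sub_rev u v, norm_sub_rev u w]
    exact hmin w hw
  · have hbdd : BddBelow (Set.range fun w : S => ‖u - (w : E)‖) :=
      ⟨0, by rintro _ ⟨w, rfl⟩; exact norm_nonneg _⟩
    exact ciInf_le hbdd ⟨v, hv⟩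

lemma key_ineq {E : Type*} [NormedAddCommGroup E] [InnerProductSpace ℝ E] [CompleteSpace E]
    {S : Set E} (hconv : Convex ℝ S) {f : E → ℝ} {f' : E → E}
    (hf : ConvexOn ℝ Set.univ f) (hgrad : ∀ x, HasGradientAt f (f' x) x)
    {L : ℝ} (hL : 0 < L) (hlip : ∀ x y, ‖f' x - f' y‖ ≤ L * ‖x - y‖)
    (y p : E) (hpS : p ∈ S)
    (hpmin : ∀ x ∈ S, ‖p - (y - (1 / L) • f' y)‖ ≤ ‖x - (y - (1 / L) • f' y)‖)
    (x : E) (hx : x ∈ S) :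
    L / 2 * ‖p - y‖ ^ 2 + L * ⟪y - x, p - y⟫ ≤ f x - f p := by
  have h1 : f p ≤ f y + ⟪f' y, p - y⟫ + L / 2 * ‖p - y‖ ^ 2 :=
    descent_lemma hgrad hL hlip y p
  have h2 : f y + ⟪f' y, x - y⟫ ≤ f x := convex_grad_ineq hf (hgrad y) x
  have h3 : ⟪(y - (1 / L) • f' y) - p, x - p⟫ ≤ 0 := proj_vi hconv hpS hpmin x hx
  -- rewrite h3
  have h3' : ⟪y - p, x - p⟫ - (1 / L) * ⟪f' y, x - p⟫ ≤ 0 := by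
    have : (y - (1 / L) • f' y) - p = (y - p) - (1 / L) • f' y := by abel
    rw [this, inner_sub_left, real_inner_smul_left] at h3
    linarith
  have h4 : L * ⟪y - p, x - p⟫ ≤ ⟪f' y, x - p⟫ := by
    have := mul_le_mul_of_nonneg_left h3' hL.le
    field_simp at this
    nlinarith [this]
  have h5 : ⟪f' y, x - p⟫ = ⟪f' y, x - y⟫ - ⟪f' y, p - y⟫ := by
    rw [← inner_sub_right]
    congr 1
    abel
  have h6 : ⟪y - p, x - p⟫ = ⟪y - x, p - y⟫ + ‖p - y‖ ^ 2 := by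
    have e1 : x - p = (x - y) - (p - y) := by abel
    have e2 : y - p = -(p - y) := by abel
    rw [e1, e2, inner_sub_right, inner_neg_left, inner_neg_left,
      ← real_inner_self_eq_norm_sq]
    have hc : ⟪p - y, x - y⟫ = -⟪y - x, p - y⟫ := by
      rw [real_inner_comm, show y - x = -(x - y) by abel, inner_neg_left, neg_neg]
    linarith [hc]
  nlinarith [h4, h6, h5, h1, h2]

open MeasureTheory Real

set_option maxHeartbeats 1000000

/-- Convergence of the accelerated proximal gradient method (Theorem 4). Here
`ℝ^{d1×d2}` with the Frobenius inner product is modelled as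
`EuclideanSpace ℝ (Fin d1 × Fin d2)`, and the projection `Π_S` is given as a map `proj`
characterized as the minimizer of the distance to `S`. The iterates are
`M_k = Π_S(Z_{k−1} − (1/L)∇f(Z_{k−1}))` and `Z_k = M_k + ((k−1)/(k+2))(M_k − M_{k−1})`
for `k ≥ 1`, with `Z_0 = M_0 ∈ S`. -/

theorem accelerated_proximal_gradient_convergence (d1 d2 : ℕ)
    (S : Set (EuclideanSpace ℝ (Fin d1 × Fin d2)))
    (hne : S.Nonempty) (hcl : IsClosed S) (hconv : Convex ℝ S)
    (f : EuclideanSpace ℝ (Fin d1 × Fin d2) → ℝ)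
    (f' : EuclideanSpace ℝ (Fin d1 × Fin d2) → EuclideanSpace ℝ (Fin d1 × Fin d2))
    (hf : ConvexOn ℝ Set.univ f)
    (hgrad : ∀ x, HasGradientAt f (f' x) x)
    (L : ℝ) (hL : 0 < L)
    (hlip : ∀ x y, ‖f' x - f' y‖ ≤ L * ‖x - y‖)
    (proj : EuclideanSpace ℝ (Fin d1 × Fin d2) → EuclideanSpace ℝ (Fin d1 × Fin d2))
    (hproj : ∀ y, proj y ∈ S ∧ ∀ x ∈ S, ‖proj y - y‖ ≤ ‖x - y‖)
    (Mhat : EuclideanSpace ℝ (Fin d1 × Fin d2))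
    (hMhatS : Mhat ∈ S) (hMhatmin : ∀ x ∈ S, f Mhat ≤ f x)
    (M Z : ℕ → EuclideanSpace ℝ (Fin d1 × Fin d2))
    (hM0 : M 0 ∈ S) (hZ0 : Z 0 = M 0)
    (hiterM : ∀ k : ℕ, M (k + 1) = proj (Z k - (1 / L) • f' (Z k)))
    (hiterZ : ∀ k : ℕ,
      Z (k + 1) = M (k + 1) + (((k + 1 : ℕ) - 1 : ℝ) / ((k + 1 : ℕ) + 2 : ℝ)) • (M (k + 1) - M k))
    (k : ℕ) (hk : 1 ≤ k) :
    f (M k) - f Mhat ≤ 2 * L * ‖M 0 - Mhat‖ ^ 2 / ((k : ℝ) + 1) ^ 2 := by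
  have hL0 : L ≠ 0 := ne_of_gt hL
  have hMS : ∀ n, M n ∈ S := by
    intro n
    cases n with
    | zero => exact hM0
    | succ m => rw [hiterM m]; exact (hproj _).1
  have key : ∀ (n : ℕ) (x : EuclideanSpace ℝ (Fin d1 × Fin d2)), x ∈ S →
      L / 2 * ‖M (n+1) - Z n‖ ^ 2 + L * ⟪Z n - x, M (n+1) - Z n⟫ ≤ f x - f (M (n+1)) := by
    intro n x hx
    have hpS : M (n+1) ∈ S := hMS (n+1)
    have hpmin : ∀ w ∈ S, ‖M (n+1) - (Z n - (1 / L) • f' (Z n))‖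
        ≤ ‖w - (Z n - (1 / L) • f' (Z n))‖ := by
      intro w hw
      rw [hiterM n]
      exact (hproj _).2 w hw
    exact key_ineq hconv hf hgrad hL hlip (Z n) (M (n+1)) hpS hpmin x hx
  have hv : ∀ n, 0 ≤ f (M n) - f Mhat := fun n => sub_nonneg.2 (hMhatmin _ (hMS n))
  have main : ∀ n : ℕ, 1 ≤ n →
      2 / L * (((n:ℝ) + 1) / 2) ^ 2 * (f (M n) - f Mhat)
        + ‖(((n:ℝ) + 1) / 2) • M n - ((((n:ℝ) + 1) / 2) - 1) • M (n - 1) - Mhat‖ ^ 2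
        ≤ ‖M 0 - Mhat‖ ^ 2 := by
    intro n hn
    induction n, hn using Nat.le_induction with
    | base =>
      have hb := key 0 Mhat hMhatS
      rw [hZ0] at hb
      simp only [Nat.zero_add] at hb
      have hb' := mul_le_mul_of_nonneg_left hb (le_of_lt (div_pos two_pos hL))
      have hsimp : 2 / L * (L / 2 * ‖M 1 - M 0‖ ^ 2 + L * ⟪M 0 - Mhat, M 1 - M 0⟫)
          = ‖M 1 - M 0‖ ^ 2 + 2 * ⟪M 0 - Mhat, M 1 - M 0⟫ := by
        field_simp
      rw [hsimp] at hb'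
      have hexp : ‖M 1 - Mhat‖ ^ 2
          = ‖M 1 - M 0‖ ^ 2 + 2 * ⟪M 1 - M 0, M 0 - Mhat⟫ + ‖M 0 - Mhat‖ ^ 2 := by
        rw [show M 1 - Mhat = (M 1 - M 0) + (M 0 - Mhat) by abel]
        exact norm_add_sq_real _ _
      have hcomm : ⟪M 1 - M 0, M 0 - Mhat⟫ = ⟪M 0 - Mhat, M 1 - M 0⟫ := real_inner_comm _ _
      have e0 : (((1:ℕ):ℝ) + 1) / 2 = 1 := by norm_num
      rw [e0]
      simp only [show (1:ℕ) - 1 = 0 from rfl, one_smul, sub_self, zero_smul, sub_zero]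
      have h2L := hv 1
      nlinarith [hb', hexp, hcomm]
    | succ n hn IH =>
      obtain ⟨j, rfl⟩ : ∃ j, n = j + 1 := ⟨n - 1, by omega⟩
      simp only [Nat.add_sub_cancel] at IH ⊢
      have e0 : (((j+1:ℕ):ℝ) + 1) / 2 = ((j:ℝ) + 2) / 2 := by push_cast; ring
      have e1 : (((j+1+1:ℕ):ℝ) + 1) / 2 = ((j:ℝ) + 3) / 2 := by push_cast; ring
      rw [e0] at IH
      rw [e1]
      set t : ℝ := ((j:ℝ) + 3) / 2 with ht
      have ht0 : (0:ℝ) < t := by rw [ht]; positivity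
      have ht1 : (0:ℝ) ≤ t - 1 := by
        have h : t - 1 = ((j:ℝ) + 1) / 2 := by rw [ht]; ring
        rw [h]; positivity
      set w : EuclideanSpace ℝ (Fin d1 × Fin d2)
        := t • Z (j+1) - (t-1) • M (j+1) - Mhat with hwdef
      have hw : (((j:ℝ) + 2) / 2) • M (j+1) - ((((j:ℝ) + 2) / 2) - 1) • M j - Mhat = w := by
        rw [hwdef, ht, hiterZ j]
        have hj3 : ((j:ℝ)) + 3 ≠ 0 := by positivity
        push_cast
        match_scalars <;> field_simp <;> ring
      rw [hw] at IH
      have hu2 : t • M (j+1+1) - (t - 1) • M (j+1) - Mhat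
          = t • (M (j+1+1) - Z (j+1)) + w := by
        rw [hwdef]; module
      rw [hu2]
      have hnorm : ‖t • (M (j+1+1) - Z (j+1)) + w‖ ^ 2
          = t^2 * ‖M (j+1+1) - Z (j+1)‖ ^ 2
            + 2 * (t * ⟪M (j+1+1) - Z (j+1), w⟫) + ‖w‖ ^ 2 := by
        rw [norm_add_sq_real, real_inner_smul_left, norm_smul, Real.norm_eq_abs,
          mul_pow, sq_abs]
      rw [hnorm]
      have ha := key (j+1) (M (j+1)) (hMS (j+1))
      have hbb := key (j+1) Mhat hMhatS
      have hvec : (t-1) • (Z (j+1) - M (j+1)) + (Z (j+1) - Mhat) = w := by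
        rw [hwdef]; module
      have hinner : (t-1) * ⟪Z (j+1) - M (j+1), M (j+1+1) - Z (j+1)⟫
          + ⟪Z (j+1) - Mhat, M (j+1+1) - Z (j+1)⟫
          = ⟪M (j+1+1) - Z (j+1), w⟫ := by
        rw [← real_inner_smul_left, ← inner_add_left, hvec, real_inner_comm]
      have hcomb : L/2 * t * ‖M (j+1+1) - Z (j+1)‖ ^ 2
          + L * ((t-1) * ⟪Z (j+1) - M (j+1), M (j+1+1) - Z (j+1)⟫
              + ⟪Z (j+1) - Mhat, M (j+1+1) - Z (j+1)⟫)
          ≤ (t-1) * (f (M (j+1)) - f Mhat) - t * (f (M (j+1+1)) - f Mhat) := by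
        have h1 := mul_le_mul_of_nonneg_left ha ht1
        linarith [h1, hbb]
      rw [hinner] at hcomb
      have h2tL : (0:ℝ) ≤ 2*t/L := le_of_lt (div_pos (by linarith) hL)
      have h2 := mul_le_mul_of_nonneg_left hcomb h2tL
      have eLHS : 2*t/L * (L/2 * t * ‖M (j+1+1) - Z (j+1)‖ ^ 2
            + L * ⟪M (j+1+1) - Z (j+1), w⟫)
          = t^2 * ‖M (j+1+1) - Z (j+1)‖ ^ 2 + 2 * (t * ⟪M (j+1+1) - Z (j+1), w⟫) := by
        field_simp
      have eRHS : 2*t/L * ((t-1) * (f (M (j+1)) - f Mhat) - t * (f (M (j+1+1)) - f Mhat))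
          = 2/L * (((t-1)*t) * (f (M (j+1)) - f Mhat)) - 2/L * (t^2 * (f (M (j+1+1)) - f Mhat)) := by
        ring
      rw [eLHS, eRHS] at h2
      have hcoef : (t-1)*t ≤ (((j:ℝ) + 2) / 2) ^ 2 := by
        have h : (((j:ℝ) + 2) / 2) ^ 2 - (t-1)*t = 1/4 := by rw [ht]; ring
        linarith
      have h5 : ((t-1)*t) * (f (M (j+1)) - f Mhat)
          ≤ ((((j:ℝ) + 2) / 2) ^ 2) * (f (M (j+1)) - f Mhat) :=
        mul_le_mul_of_nonneg_right hcoef (hv (j+1))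
      have h6 := mul_le_mul_of_nonneg_left h5 (le_of_lt (div_pos two_pos hL))
      linarith [h2, h6, IH]
  have hm := main k hk
  have hnn : (0:ℝ) ≤ ‖(((k:ℝ) + 1) / 2) • M k - ((((k:ℝ) + 1) / 2) - 1) • M (k - 1) - Mhat‖ ^ 2 :=
    sq_nonneg _
  have h7 : 2 / L * (((k:ℝ) + 1) / 2) ^ 2 * (f (M k) - f Mhat) ≤ ‖M 0 - Mhat‖ ^ 2 := by
    linarith
  have h8 := mul_le_mul_of_nonneg_left h7 hL.le
  have e9 : L * (2 / L * (((k:ℝ) + 1) / 2) ^ 2 * (f (M k) - f Mhat))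
      = ((k:ℝ) + 1) ^ 2 / 2 * (f (M k) - f Mhat) := by
    field_simp
  rw [e9] at h8
  rw [le_div_iff₀ (by positivity : (0:ℝ) < ((k:ℝ) + 1) ^ 2)]
  linarith [h8]
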